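/- Assume the ensemble setup. For all s ≥ 1 and all n ≥ s + 1, the dominant term satisfies the lower bound μ_{2s,s+1}^{(n)} ≥ ((n−s)/n)^{s+1}·C_s·σ̌_n^{2s}, where C_s = Nat.catalan s is the s-th Catalan number. -/

import Mathlib

open MeasureTheory ProbabilityTheory Filter

/-- The random matrix `A_n` with entries `a i j / √n` (indices in `{1,…,n}`). -/
noncomputable def matA {Ω : Type} (a : ℕ → ℕ → Ω → ℝ) (n : ℕ) (ω : Ω) :
    Matrix (Fin n) (Fin n) ℝ :=
  Matrix.of fun u v => a (u.1 + 1) (v.1 + 1) ω / Real.sqrt n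

/-- The `k`-th spectral moment `m_k^{(n)} = (1/n)·trace(A_n^k)`. -/
noncomputable def specMom {Ω : Type} (a : ℕ → ℕ → Ω → ℝ) (n k : ℕ) (ω : Ω) : ℝ :=
  (1 / (n : ℝ)) * Matrix.trace ((matA a n ω) ^ k)

/-- The `k`-th expected spectral moment `m̄_k^{(n)} = E[m_k^{(n)}]`. -/
noncomputable def expSpecMom {Ω : Type} [MeasurableSpace Ω] (P : Measure Ω)
    (a : ℕ → ℕ → Ω → ℝ) (n k : ℕ) : ℝ :=
  ∫ ω, specMom a n k ω ∂P

/-- `σ̂_n = max_{1 ≤ i ≤ n} σ i`. -/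
noncomputable def sigHat (σ : ℕ → ℝ) (n : ℕ) : ℝ := sSup (σ '' Set.Icc 1 n)

/-- `σ̌_n = min_{1 ≤ i ≤ n} σ i`. -/
noncomputable def sigCheck (σ : ℕ → ℝ) (n : ℕ) : ℝ := sInf (σ '' Set.Icc 1 n)

/-- Number of times the closed walk `w : ZMod k → Fin n` traverses the unordered edge `e`. -/
noncomputable def edgeCount (k n : ℕ) (e : Sym2 (Fin n)) (w : ZMod k → Fin n) : ℕ :=
  Nat.card {j : ZMod k // s(w j, w (j + 1)) = e}

/-- Closed walks of length `k` on `Fin n` visiting exactly `p` distinct vertices. -/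
def Wset (k n p : ℕ) : Set (ZMod k → Fin n) := {w | Nat.card (Set.range w) = p}

/-- Walks in `Wset k n p` that traverse each of their edges at least twice. -/
def WhatSet (k n p : ℕ) : Set (ZMod k → Fin n) :=
  {w ∈ Wset k n p | ∀ e : Sym2 (Fin n), 1 ≤ edgeCount k n e w → 2 ≤ edgeCount k n e w}

open Classical in
/-- `μ_{k,p}^{(n)} = n^{−(k/2+1)} ∑_{w ∈ W_{k,p}} E[∏_j a_{w(j) w(j+1)}]`. -/
noncomputable def muW {Ω : Type} [MeasurableSpace Ω] (P : Measure Ω)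
    (a : ℕ → ℕ → Ω → ℝ) (k p n : ℕ) (hk : k ≠ 0) : ℝ :=
  haveI : NeZero k := ⟨hk⟩
  (n : ℝ) ^ (-((k : ℝ) / 2 + 1)) *
    ∑ w : ZMod k → Fin n,
      if w ∈ Wset k n p then
        ∫ ω, ∏ j : ZMod k, a ((w j).1 + 1) ((w (j + 1)).1 + 1) ω ∂P
      else 0



open MeasureTheory ProbabilityTheory Filter




section ProbHelpers

variable {Ω : Type} [MeasurableSpace Ω] (P : Measure Ω) [IsProbabilityMeasure P]

lemma RMTPROB.integrable_of_bound (g : Ω → ℝ) (hg : Measurable g) (C : ℝ)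
    (h : ∀ᵐ ω ∂P, |g ω| ≤ C) : Integrable g P :=
  (integrable_const C).mono' hg.aestronglyMeasurable (by simpa [Real.norm_eq_abs] using h)

lemma RMTPROB.indep_prod {ι' : Type*} (f : ι' → Ω → ℝ)
    (h : iIndepFun f P)
    (hm : ∀ i, Measurable (f i)) (C : ι' → ℝ)
    (hb : ∀ i, ∀ᵐ ω ∂P, |f i ω| ≤ C i) (T : Finset ι') :
    Integrable (fun ω => ∏ i ∈ T, f i ω) P ∧
      ∫ ω, ∏ i ∈ T, f i ω ∂P = ∏ i ∈ T, ∫ ω, f i ω ∂P := by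
  classical
  induction T using Finset.induction_on with
  | empty => simp [integrable_const]
  | insert i T hi ih =>
    have hfi : Integrable (f i) P := RMTPROB.integrable_of_bound P (f i) (hm i) (C i) (hb i)
    have hind : IndepFun (f i) (fun ω => ∏ j ∈ T, f j ω) P := by
      have := (h.indepFun_finsetProd_of_notMem hm hi).symm
      have heq : (∏ j ∈ T, f j) = fun ω => ∏ j ∈ T, f j ω := by
        funext ω; simp [Finset.prod_apply]
      rwa [heq] at this
    have hmul : (fun ω => ∏ j ∈ insert i T, f j ω) = (fun ω => f i ω * ∏ j ∈ T, f j ω) := by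
      funext ω; rw [Finset.prod_insert hi]
    constructor
    · rw [hmul]
      have := hind.integrable_mul hfi ih.1
      simpa [Pi.mul_def] using this
    · rw [hmul, Finset.prod_insert hi, ← ih.2]
      have := hind.integral_fun_mul_eq_mul_integral hfi.aestronglyMeasurable ih.1.aestronglyMeasurable
      simpa [Pi.mul_def] using this

end ProbHelpers

namespace RMTX


open List DyckStep


/-- State of the DFS stack machine reading a Dyck word. -/
structure DS : Type where
  st : List ℕ
  c : ℕ
  pushes : Multiset ℕ
  pops : Multiset ℕ
  pf : ℕ → ℕ
  edges : Multiset (ℕ × ℕ)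

/-- One step of the machine. -/
def dstep (S : DS) : DyckStep → DS
  | U => { st := S.c :: S.st, c := S.c + 1, pushes := S.c ::ₘ S.pushes, pops := S.pops,
           pf := Function.update S.pf S.c S.st.headI,
           edges := (S.st.headI, S.c) ::ₘ S.edges }
  | D => { st := S.st.tail, c := S.c, pushes := S.pushes, pops := S.st.headI ::ₘ S.pops,
           pf := S.pf, edges := (S.st.tail.headI, S.st.headI) ::ₘ S.edges }

def dinit : DS := ⟨[0], 1, 0, 0, id, 0⟩

def drun (l : List DyckStep) : DS := l.foldl dstep dinit

@[simp] lemma drun_nil : drun [] = dinit := rfl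

lemma drun_concat (l : List DyckStep) (x : DyckStep) :
    drun (l ++ ([x])) = dstep (drun l) x := by
  simp [drun, List.foldl_append]

/-- Top of the stack after reading `l`. -/
def dtop (l : List DyckStep) : ℕ := (drun l).st.headI

/-- Prefix dominance. -/
def Dom (l : List DyckStep) : Prop :=
  ∀ i, (l.take i).count D ≤ (l.take i).count U

lemma Dom.take {l : List DyckStep} (h : Dom l) (m : ℕ) : Dom (l.take m) := by
  intro i
  rw [List.take_take]
  exact h _

lemma Dom.prefix {l : List DyckStep} {x : DyckStep} (h : Dom (l ++ ([x]))) : Dom l := by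
  have := h.take l.length
  simpa [List.take_left] using this

lemma chain'_update {pf : ℕ → ℕ} {c v : ℕ} (st : List ℕ) (hb : ∀ x ∈ st, x ≠ c)
    (h : st.IsChain (fun x y => pf x = y)) :
    st.IsChain (fun x y => Function.update pf c v x = y) := by
  rw [List.isChain_iff_getElem] at h ⊢
  intro i hi
  rw [Function.update_of_ne (hb _ (List.getElem_mem (by omega)))]
  exact h i hi

/-- The invariant maintained by the machine on dominated words. -/
structure DInv (l : List DyckStep) (S : DS) : Prop where
  hc : S.c = l.count U + 1
  hlen : S.st.length + l.count D = l.count U + 1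
  hchain : S.st.IsChain (· > ·)
  hlast : S.st.getLast? = some 0
  hbound : ∀ x ∈ S.st, x < S.c
  hpushes : S.pushes = (Multiset.range (l.count U)).map (· + 1)
  hbal : ↑S.st + S.pops = 0 ::ₘ S.pushes
  hpchain : S.st.IsChain (fun x y => S.pf x = y)
  hpf : ∀ x ∈ S.pushes, S.pf x < x
  hedges : S.edges = (S.pushes + S.pops).map (fun x => (S.pf x, x))

lemma DInv.st_ne_nil {l S} (h : DInv l S) : S.st ≠ [] := by
  intro hn
  have := h.hlast
  rw [hn] at this
  simp at this

lemma DInv.mem_pushes_lt {l S} (h : DInv l S) {x : ℕ} (hx : x ∈ S.pushes) : x < S.c := by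
  rw [h.hpushes] at hx
  obtain ⟨y, hy, rfl⟩ := Multiset.mem_map.mp hx
  rw [Multiset.mem_range] at hy
  have := h.hc
  omega

lemma DInv.mem_pops_lt {l S} (h : DInv l S) {x : ℕ} (hx : x ∈ S.pops) : x < S.c := by
  have hmem : x ∈ ↑S.st + S.pops := by
    rw [Multiset.mem_add]; exact Or.inr hx
  rw [h.hbal, Multiset.mem_cons] at hmem
  rcases hmem with rfl | hx'
  · have := h.hc; omega
  · exact h.mem_pushes_lt hx'

/-- At a `D` step of a dominated word, the stack has length at least 2;
we also extract the useful structure. -/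
lemma DInv.pop_struct {l : List DyckStep} {S : DS} (h : DInv l S)
    (hdom : Dom (l ++ ([D]))) :
    ∃ h0 h1 t, S.st = h0 :: h1 :: t ∧ S.pf h0 = h1 ∧ h1 < h0 ∧ h0 ∈ S.pushes := by
  have hcnt := hdom (l.length + 1)
  rw [List.take_of_length_le (by simp)] at hcnt
  simp only [List.count_append] at hcnt
  have hDc : count D ([D]) = 1 := by simp
  have hUc : count U ([D]) = 0 := by simp
  rw [hDc, hUc] at hcnt
  have hlen2 : 2 ≤ S.st.length := by have := h.hlen; omega
  obtain ⟨h0, t0, hst0⟩ := List.exists_cons_of_ne_nil h.st_ne_nil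
  have ht0 : t0 ≠ [] := by
    intro hn; rw [hst0, hn] at hlen2; simp at hlen2
  obtain ⟨h1, t, hst1⟩ := List.exists_cons_of_ne_nil ht0
  subst hst1
  refine ⟨h0, h1, t, hst0, ?_, ?_, ?_⟩
  · have := h.hpchain; rw [hst0, List.isChain_cons_cons] at this; exact this.1
  · have := h.hchain; rw [hst0, List.isChain_cons_cons] at this; exact this.1
  · -- h0 ∈ pushes : h0 ∈ stack, and h0 ≠ 0
    have hmem : h0 ∈ (↑S.st + S.pops : Multiset ℕ) := by
      rw [Multiset.mem_add]
      left; rw [hst0]; simp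
    rw [h.hbal, Multiset.mem_cons] at hmem
    rcases hmem with hz | hm
    · -- h0 = 0 : impossible since h0 > last = 0 or h0 > h1 ≥ 0
      exfalso
      have hch := h.hchain
      rw [hst0] at hch
      rw [List.isChain_iff_pairwise] at hch
      have hlast := h.hlast
      rw [hst0, List.getLast?_cons_cons] at hlast
      have h0mem : (0 : ℕ) ∈ h1 :: t := by
        rw [List.getLast?_eq_getLast (by simp), Option.some_inj] at hlast
        have := List.getLast_mem (l := h1 :: t) (by simp)
        rw [hlast] at this; exact this
      have := (List.pairwise_cons.mp hch).1 0 h0mem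
      omega
    · exact hm

lemma dinv (l : List DyckStep) (hl : Dom l) : DInv l (drun l) := by
  induction l using List.reverseRecOn with
  | nil =>
      refine ⟨rfl, rfl, ?_, rfl, ?_, rfl, rfl, ?_, ?_, rfl⟩ <;> simp [dinit, drun]
  | append_singleton l x ih =>
      have hdom : Dom l := hl.prefix
      have IH := ih hdom
      rw [drun_concat]
      set S := drun l with hS
      cases x with
      | U =>
          obtain ⟨h0, t, hst⟩ := List.exists_cons_of_ne_nil IH.st_ne_nil
          have hheadI : S.st.headI = h0 := by rw [hst]; rfl
          have hh0lt : h0 < S.c := IH.hbound _ (by rw [hst]; simp)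
          have hcU : (l ++ ([U])).count U = l.count U + 1 := by simp
          have hcD : (l ++ ([U])).count D = l.count D := by simp
          have hcc : S.c = l.count U + 1 := IH.hc
          refine ⟨?_, ?_, ?_, ?_, ?_, ?_, ?_, ?_, ?_, ?_⟩
          · show S.c + 1 = _; rw [hcU]; omega
          · show (S.c :: S.st).length + _ = _
            rw [hcU, hcD]
            have := IH.hlen
            simp only [List.length_cons]
            omega
          · show (S.c :: S.st).IsChain (· > ·)
            rw [hst, List.isChain_cons_cons]
            exact ⟨by omega, by rw [← hst]; exact IH.hchain⟩
          · show (S.c :: S.st).getLast? = some 0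
            rw [hst, List.getLast?_cons_cons, ← hst]
            exact IH.hlast
          · show ∀ y ∈ (S.c :: S.st), y < S.c + 1
            intro y hy
            rcases List.mem_cons.mp hy with rfl | hy'
            · omega
            · have := IH.hbound _ hy'; omega
          · show (S.c ::ₘ S.pushes) = _
            rw [hcU, Multiset.range_succ, Multiset.map_cons, IH.hpushes, hcc]
          · show ↑(S.c :: S.st) + S.pops = 0 ::ₘ (S.c ::ₘ S.pushes)
            rw [← Multiset.cons_coe, Multiset.cons_add, IH.hbal, Multiset.cons_swap]
          · show (S.c :: S.st).IsChain (fun a b => Function.update S.pf S.c S.st.headI a = b)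
            rw [hst, List.isChain_cons_cons]
            constructor
            · rw [Function.update_self]; rfl
            · rw [← hst]
              refine chain'_update _ (fun y hy => ?_) IH.hpchain
              have := IH.hbound _ hy; omega
          · show ∀ y ∈ (S.c ::ₘ S.pushes), Function.update S.pf S.c S.st.headI y < y
            intro y hy
            rcases Multiset.mem_cons.mp hy with rfl | hy'
            · rw [Function.update_self, hheadI]; omega
            · rw [Function.update_of_ne (by have := IH.mem_pushes_lt hy'; omega)]
              exact IH.hpf _ hy'
          · show ((S.st.headI, S.c) ::ₘ S.edges)
                = ((S.c ::ₘ S.pushes) + S.pops).map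
                    (fun y => (Function.update S.pf S.c S.st.headI y, y))
            simp only [Multiset.cons_add, Multiset.map_cons, Function.update_self]
            congr 1
            rw [IH.hedges]
            refine Multiset.map_congr rfl (fun y hy => ?_)
            have hylt : y < S.c := by
              rcases Multiset.mem_add.mp hy with hy' | hy'
              · exact IH.mem_pushes_lt hy'
              · exact IH.mem_pops_lt hy'
            rw [Function.update_of_ne (by omega)]
      | D =>
          obtain ⟨h0, h1, t, hst, hpfh, hlt, hmem⟩ := IH.pop_struct hl
          have hcU : (l ++ ([D])).count U = l.count U := by simp
          have hcD : (l ++ ([D])).count D = l.count D + 1 := by simp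
          have htail : S.st.tail = h1 :: t := by rw [hst]; rfl
          have hheadI : S.st.headI = h0 := by rw [hst]; rfl
          refine ⟨?_, ?_, ?_, ?_, ?_, ?_, ?_, ?_, ?_, ?_⟩
          · show S.c = _; rw [hcU]; exact IH.hc
          · show S.st.tail.length + _ = _
            rw [hcU, hcD, htail]
            have := IH.hlen
            rw [hst] at this
            simp only [List.length_cons] at this ⊢
            omega
          · show S.st.tail.IsChain (· > ·)
            rw [htail]
            have := IH.hchain; rw [hst, List.isChain_cons_cons] at this
            exact this.2
          · show S.st.tail.getLast? = some 0
            rw [htail]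
            have := IH.hlast; rw [hst, List.getLast?_cons_cons] at this
            exact this
          · show ∀ y ∈ S.st.tail, y < S.c
            intro y hy
            exact IH.hbound _ (by rw [hst]; rw [htail] at hy; exact List.mem_cons_of_mem _ hy)
          · show S.pushes = _; rw [hcU]; exact IH.hpushes
          · show ↑S.st.tail + (S.st.headI ::ₘ S.pops) = 0 ::ₘ S.pushes
            rw [← IH.hbal, hst]
            show ↑(h1 :: t) + (h0 ::ₘ S.pops) = ↑(h0 :: h1 :: t) + S.pops
            rw [Multiset.add_cons, ← Multiset.cons_coe, ← Multiset.cons_coe,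
              Multiset.cons_add, Multiset.cons_add, ← Multiset.cons_coe, Multiset.cons_add]
          · show S.st.tail.IsChain _
            rw [htail]
            have := IH.hpchain; rw [hst, List.isChain_cons_cons] at this
            exact this.2
          · exact IH.hpf
          · show ((S.st.tail.headI, S.st.headI) ::ₘ S.edges)
                = (S.pushes + (S.st.headI ::ₘ S.pops)).map (fun y => (S.pf y, y))
            rw [hst]
            show ((h1, h0) ::ₘ S.edges)
                = (S.pushes + (h0 ::ₘ S.pops)).map (fun y => (S.pf y, y))
            simp only [Multiset.add_cons, Multiset.map_cons]
            rw [hpfh, IH.hedges]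


lemma count_take_le (l : List DyckStep) (i : ℕ) (x : DyckStep) :
    (l.take i).count x ≤ l.count x :=
  (List.take_sublist i l).count_le x

lemma drun_take_append (l l2 : List DyckStep) {j : ℕ} (hj : j ≤ l.length) :
    drun ((l ++ l2).take j) = drun (l.take j) := by
  rw [List.take_append_of_le_length hj]

lemma dtop_take_append (l l2 : List DyckStep) {j : ℕ} (hj : j ≤ l.length) :
    dtop ((l ++ l2).take j) = dtop (l.take j) := by
  rw [dtop, drun_take_append l l2 hj]; rfl

lemma dtop_lt_c (l : List DyckStep) (hdom : Dom l) : dtop l < (drun l).c := by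
  have I := dinv l hdom
  obtain ⟨h0, t, hst⟩ := List.exists_cons_of_ne_nil I.st_ne_nil
  have : dtop l = h0 := by rw [dtop, hst]; rfl
  rw [this]
  exact I.hbound _ (by rw [hst]; simp)

lemma c_drun (l : List DyckStep) (hdom : Dom l) : (drun l).c = l.count U + 1 :=
  (dinv l hdom).hc

lemma dtop_take_le_countU (l : List DyckStep) (hdom : Dom l) (j : ℕ) :
    dtop (l.take j) ≤ (l.take j).count U := by
  have := dtop_lt_c (l.take j) (hdom.take j)
  rw [c_drun _ (hdom.take j)] at this
  omega

lemma dtop_take_lt_c (l : List DyckStep) (hdom : Dom l) {i j : ℕ} (hij : i ≤ j) :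
    dtop (l.take i) < (drun (l.take j)).c := by
  have h1 := dtop_take_le_countU l hdom i
  rw [c_drun _ (hdom.take j)]
  have h2 : (l.take i).count U ≤ (l.take j).count U := by
    have : l.take i = (l.take j).take i := by rw [List.take_take, min_eq_left hij]
    rw [this]
    exact count_take_le _ _ _
  omega

lemma drun_take_succ (l : List DyckStep) {j : ℕ} (hj : j < l.length) :
    drun (l.take (j + 1)) = dstep (drun (l.take j)) l[j] := by
  rw [← List.take_concat_get hj, List.concat_eq_append, drun_concat]

lemma dtop_take_succ_U (l : List DyckStep) {j : ℕ} (hj : j < l.length)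
    (hU : l[j] = U) : dtop (l.take (j + 1)) = (drun (l.take j)).c := by
  rw [dtop, drun_take_succ l hj, hU]; rfl

lemma dtop_take_succ_D (l : List DyckStep) (hdom : Dom l) {j : ℕ} (hj : j < l.length)
    (hD : l[j] = D) : dtop (l.take (j + 1)) ∈ (drun (l.take j)).st ∧
      dtop (l.take (j + 1)) < dtop (l.take j) := by
  have hdomD : Dom (l.take j ++ ([D])) := by
    have h1 : l.take j ++ ([l[j]]) = l.take (j + 1) := by
      rw [← List.concat_eq_append, List.take_concat_get]
    rw [hD] at h1
    rw [h1]
    exact hdom.take _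
  obtain ⟨h0, h1, t, hst, hpf, hlt, hmem⟩ := (dinv _ (hdom.take j)).pop_struct hdomD
  have htop1 : dtop (l.take (j + 1)) = h1 := by
    rw [dtop, drun_take_succ l hj, hD]
    show (drun (l.take j)).st.tail.headI = h1
    rw [hst]
    rfl
  have htop0 : dtop (l.take j) = h0 := by rw [dtop, hst]; rfl
  rw [htop1, htop0]
  exact ⟨by rw [hst]; simp, hlt⟩

lemma exists_time_of_stack (l : List DyckStep) (hdom : Dom l) :
    ∀ x ∈ (drun l).st, ∃ j ≤ l.length, dtop (l.take j) = x := by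
  induction l using List.reverseRecOn with
  | nil =>
      intro x hx
      simp only [drun_nil, dinit, List.mem_singleton] at hx
      subst hx
      exact ⟨0, by simp, rfl⟩
  | append_singleton l y ih =>
      have hdoml : Dom l := hdom.prefix
      intro x hx
      rw [drun_concat] at hx
      cases y with
      | U =>
          rcases List.mem_cons.mp hx with rfl | hx'
          · refine ⟨l.length + 1, by simp, ?_⟩
            rw [List.take_of_length_le (by simp), dtop, drun_concat]
            rfl
          · obtain ⟨j, hj, hjt⟩ := ih hdoml x hx'
            exact ⟨j, by simp; omega, by rw [dtop_take_append l ([U]) hj]; exact hjt⟩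
      | D =>
          have hx' : x ∈ (drun l).st := List.mem_of_mem_tail hx
          obtain ⟨j, hj, hjt⟩ := ih hdoml x hx'
          exact ⟨j, by simp; omega, by rw [dtop_take_append l ([D]) hj]; exact hjt⟩

lemma exists_time_of_push (l : List DyckStep) (hdom : Dom l) :
    ∀ x ∈ (drun l).pushes, ∃ j ≤ l.length, dtop (l.take j) = x := by
  induction l using List.reverseRecOn with
  | nil => intro x hx; simp [drun_nil, dinit] at hx
  | append_singleton l y ih =>
      have hdoml : Dom l := hdom.prefix
      intro x hx
      rw [drun_concat] at hx
      cases y with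
      | U =>
          rcases Multiset.mem_cons.mp hx with rfl | hx'
          · refine ⟨l.length + 1, by simp, ?_⟩
            rw [List.take_of_length_le (by simp), dtop, drun_concat]
            rfl
          · obtain ⟨j, hj, hjt⟩ := ih hdoml x hx'
            exact ⟨j, by simp; omega, by rw [dtop_take_append l ([U]) hj]; exact hjt⟩
      | D =>
          obtain ⟨j, hj, hjt⟩ := ih hdoml x hx
          exact ⟨j, by simp; omega, by rw [dtop_take_append l ([D]) hj]; exact hjt⟩

/-- The (sorted) vertex–pairs of the successive steps of the walk. -/
def stepPairs (l : List DyckStep) : List (ℕ × ℕ) :=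
  (List.range l.length).map fun j =>
    (min (dtop (l.take j)) (dtop (l.take (j + 1))),
     max (dtop (l.take j)) (dtop (l.take (j + 1))))

lemma stepPairs_eq (l : List DyckStep) (hdom : Dom l) :
    (↑(stepPairs l) : Multiset (ℕ × ℕ)) = (drun l).edges := by
  induction l using List.reverseRecOn with
  | nil => rfl
  | append_singleton l y ih =>
      have hdoml : Dom l := hdom.prefix
      have hsplit : stepPairs (l ++ ([y])) = stepPairs l ++
          [(min (dtop l) (dtop (l ++ ([y]))), max (dtop l) (dtop (l ++ ([y]))))] := by
        rw [stepPairs, List.length_append, List.length_singleton, List.range_succ,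
          List.map_append]
        congr 1
        · rw [stepPairs]
          refine List.map_congr_left (fun j hj => ?_)
          rw [List.mem_range] at hj
          rw [dtop_take_append l ([y]) (by omega), dtop_take_append l ([y]) (by omega)]
        · simp only [List.map_cons, List.map_nil]
          rw [dtop_take_append l ([y]) (le_refl _), List.take_length,
            List.take_of_length_le (by simp)]
  -- now compute the new pair
      rw [hsplit]
      have hcoe : (↑(stepPairs l ++
            [(min (dtop l) (dtop (l ++ ([y]))), max (dtop l) (dtop (l ++ ([y]))))]) :
            Multiset (ℕ × ℕ)) =
          (min (dtop l) (dtop (l ++ ([y]))), max (dtop l) (dtop (l ++ ([y])))) ::ₘ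
            ↑(stepPairs l) := by
        simp
      rw [hcoe, ih hdoml, drun_concat]
      cases y with
      | U =>
          have I := dinv l hdoml
          have htopU : dtop (l ++ ([U])) = (drun l).c := by
            rw [dtop, drun_concat]; rfl
          have hlt : dtop l < (drun l).c := dtop_lt_c l hdoml
          have hdtop : dtop l = (drun l).st.headI := rfl
          rw [htopU, min_eq_left (le_of_lt hlt), max_eq_right (le_of_lt hlt), hdtop]
          rfl
      | D =>
          have hdomD : Dom (l ++ ([D])) := hdom
          obtain ⟨h0, h1, t, hst, hpf, hlt, hmem⟩ := (dinv l hdoml).pop_struct hdomD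
          have htop0 : dtop l = h0 := by rw [dtop, hst]; rfl
          have htopD : dtop (l ++ ([D])) = h1 := by
            rw [dtop, drun_concat]
            show (drun l).st.tail.headI = h1
            rw [hst]
            rfl
          rw [htop0, htopD, min_comm, min_eq_left (le_of_lt hlt), max_comm,
            max_eq_right (le_of_lt hlt)]
          show _ = ((drun l).st.tail.headI, (drun l).st.headI) ::ₘ (drun l).edges
          rw [hst]
          rfl


lemma final_st (l : List DyckStep) (hdom : Dom l) (hbal : l.count U = l.count D) :
    (drun l).st = ([0]) := by
  have I := dinv l hdom
  have hlen1 : (drun l).st.length = 1 := by have := I.hlen; omega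
  obtain ⟨x, hx⟩ := List.length_eq_one_iff.mp hlen1
  have := I.hlast
  rw [hx] at this ⊢
  simp only [List.getLast?_singleton, Option.some_inj] at this
  rw [this]

lemma final_pops (l : List DyckStep) (hdom : Dom l) (hbal : l.count U = l.count D) :
    (drun l).pops = (drun l).pushes := by
  have I := dinv l hdom
  have hst := final_st l hdom hbal
  have := I.hbal
  rw [hst] at this
  have h2 : (↑[(0:ℕ)] : Multiset ℕ) = ({0} : Multiset ℕ) := rfl
  rw [h2, Multiset.singleton_add] at this
  exact Multiset.cons_inj_right _ |>.mp this

lemma final_edges (l : List DyckStep) (hdom : Dom l) (hbal : l.count U = l.count D) :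
    (drun l).edges = (drun l).pushes.map (fun x => ((drun l).pf x, x)) +
      (drun l).pushes.map (fun x => ((drun l).pf x, x)) := by
  have I := dinv l hdom
  rw [I.hedges, final_pops l hdom hbal, Multiset.map_add]

lemma minmax_cases {a b c d : ℕ} (h1 : min a b = min c d) (h2 : max a b = max c d) :
    (a = c ∧ b = d) ∨ (a = d ∧ b = c) := by
  simp only [min_def, max_def] at h1 h2
  split_ifs at h1 h2 <;> omega

/-- The index (in the upper-triangular index set) of the unordered edge `{x, y}`
of `Fin n`, shifted to `{1, …, n}`. -/
def ridx (n : ℕ) (x y : Fin n) : {q : ℕ × ℕ // 1 ≤ q.1 ∧ q.1 ≤ q.2} :=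
  ⟨(min x.1 y.1 + 1, max x.1 y.1 + 1),
    ⟨by omega, by have := min_le_max (a := x.1) (b := y.1); omega⟩⟩

lemma ridx_comm (n : ℕ) (x y : Fin n) : ridx n x y = ridx n y x := by
  simp [ridx, min_comm, max_comm]

lemma ridx_inj {n : ℕ} {x y x' y' : Fin n} (h : ridx n x y = ridx n x' y') :
    (x = x' ∧ y = y') ∨ (x = y' ∧ y = x') := by
  rw [ridx, ridx, Subtype.mk_eq_mk, Prod.mk.injEq] at h
  obtain ⟨h1, h2⟩ := h
  have := minmax_cases (a := x.1) (b := y.1) (c := x'.1) (d := y'.1) (by omega) (by omega)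
  rcases this with ⟨ha, hb⟩ | ⟨ha, hb⟩
  · exact Or.inl ⟨Fin.ext ha, Fin.ext hb⟩
  · exact Or.inr ⟨Fin.ext ha, Fin.ext hb⟩

/-- Equivalence between `Fin k` and `ZMod k`. -/
def zeq (k : ℕ) [NeZero k] : Fin k ≃ ZMod k where
  toFun i := (i.1 : ZMod k)
  invFun x := ⟨x.val, ZMod.val_lt x⟩
  left_inv i := by
    ext
    exact ZMod.val_cast_of_lt i.isLt
  right_inv x := ZMod.natCast_rightInverse x

section Ensemble

variable {Ω : Type} [MeasurableSpace Ω] (P : MeasureTheory.Measure Ω)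
  [MeasureTheory.IsProbabilityMeasure P]
  (K : ℝ) (σ : ℕ → ℝ) (a : ℕ → ℕ → Ω → ℝ) {n : ℕ}

omit [MeasurableSpace Ω] in
lemma a_ridx (hsymm : ∀ i j, a i j = a j i) (x y : Fin n) (ω : Ω) :
    a (x.1 + 1) (y.1 + 1) ω = a (ridx n x y).1.1 (ridx n x y).1.2 ω := by
  rcases le_total x.1 y.1 with h | h
  · simp [ridx, min_eq_left h, max_eq_right h]
  · rw [hsymm]
    simp [ridx, min_eq_right h, max_eq_left h]

/-- Key graph-theoretic inequality: a closed walk of length `k` visits at most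
(number of distinct edges) + 1 vertices. -/
lemma walk_vertex_card_le (k : ℕ) [NeZero k] (w : ZMod k → Fin n) :
    (Finset.image w Finset.univ).card ≤
      (Finset.image (fun j : ZMod k => ridx n (w j) (w (j + 1))) Finset.univ).card + 1 := by
  classical
  set vm : ℕ → Fin n := fun m => w (m : ZMod k) with hvm
  set em : ℕ → {q : ℕ × ℕ // 1 ≤ q.1 ∧ q.1 ≤ q.2} :=
    fun m => ridx n (vm m) (vm (m + 1)) with hem
  have key : ∀ t : ℕ, ((Finset.range (t + 1)).image vm).card ≤
      ((Finset.range t).image em).card + 1 := by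
    intro t
    induction t with
    | zero =>
        calc ((Finset.range 1).image vm).card ≤ (Finset.range 1).card :=
              Finset.card_image_le
          _ = 1 := by simp
          _ ≤ _ := by omega
    | succ t ih =>
        rw [Finset.range_add_one, Finset.image_insert]
        by_cases hmem : vm (t + 1) ∈ (Finset.range (t + 1)).image vm
        · rw [Finset.insert_eq_self.mpr hmem]
          refine le_trans ih ?_
          have : ((Finset.range t).image em).card ≤ ((Finset.range (t+1)).image em).card :=
            Finset.card_le_card (Finset.image_subset_image (by
              intro x hx; simp only [Finset.mem_range] at *; omega))
          omega
        · rw [Finset.card_insert_of_notMem hmem]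
          have hnew : em t ∉ (Finset.range t).image em := by
            intro hc
            obtain ⟨i, hi, hie⟩ := Finset.mem_image.mp hc
            rw [Finset.mem_range] at hi
            rcases ridx_inj hie.symm with ⟨h1, h2⟩ | ⟨h1, h2⟩ <;>
            · apply hmem
              rw [Finset.mem_image]
              first
              | exact ⟨i + 1, Finset.mem_range.mpr (by omega), h2.symm⟩
              | exact ⟨i, Finset.mem_range.mpr (by omega), h2.symm⟩
          have : ((Finset.range (t+1)).image em).card = ((Finset.range t).image em).card + 1 := by
            rw [Finset.range_add_one, Finset.image_insert, Finset.card_insert_of_notMem hnew]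
          omega
  have hfull : (Finset.range ((k - 1) + 1)).image vm = Finset.image w Finset.univ := by
    apply Finset.Subset.antisymm
    · intro x hx
      obtain ⟨i, _, hie⟩ := Finset.mem_image.mp hx
      exact Finset.mem_image.mpr ⟨(i : ZMod k), Finset.mem_univ _, hie⟩
    · intro x hx
      obtain ⟨j, _, hje⟩ := Finset.mem_image.mp hx
      refine Finset.mem_image.mpr ⟨j.val, ?_, ?_⟩
      · rw [Finset.mem_range]
        have := ZMod.val_lt j
        have := Nat.pos_of_ne_zero (NeZero.ne k)
        omega
      · rw [hvm]
        simp only []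
        rw [ZMod.natCast_rightInverse j]
        exact hje
  have hsub : (Finset.range (k - 1)).image em ⊆
      Finset.image (fun j : ZMod k => ridx n (w j) (w (j + 1))) Finset.univ := by
    intro x hx
    obtain ⟨i, _, hie⟩ := Finset.mem_image.mp hx
    refine Finset.mem_image.mpr ⟨(i : ZMod k), Finset.mem_univ _, ?_⟩
    rw [← hie, hem]
    simp only [hvm]
    rw [Nat.cast_add, Nat.cast_one]
  calc (Finset.image w Finset.univ).card = ((Finset.range ((k-1)+1)).image vm).card := by
        rw [hfull]
    _ ≤ ((Finset.range (k-1)).image em).card + 1 := key _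
    _ ≤ _ := by
        have := Finset.card_le_card hsub
        omega

end Ensemble

section Ensemble2

open MeasureTheory ProbabilityTheory

variable {Ω : Type} [MeasurableSpace Ω] (P : Measure Ω) [IsProbabilityMeasure P]
  (K : ℝ) (σ : ℕ → ℝ) (a : ℕ → ℕ → Ω → ℝ) {n : ℕ}

lemma exp_nonneg
    (hK : 0 < K)
    (hmeas : ∀ i j, Measurable (a i j))
    (hsymm : ∀ i j, a i j = a j i)
    (hindep : iIndepFun
      (fun q : {q : ℕ × ℕ // 1 ≤ q.1 ∧ q.1 ≤ q.2} => a q.1.1 q.1.2) P)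
    (hmean : ∀ i j, 1 ≤ i → 1 ≤ j → ∫ ω, a i j ω ∂P = 0)
    (hvar : ∀ i j, 1 ≤ i → 1 ≤ j → ∫ ω, (a i j ω) ^ 2 ∂P = σ i * σ j)
    (hσpos : ∀ i, 1 ≤ i → 0 < σ i)
    (hbdd : ∀ i j, 1 ≤ i → 1 ≤ j → ∀ᵐ ω ∂P, |a i j ω| < K)
    (s : ℕ) (hs : 1 ≤ s) [NeZero (2 * s)]
    (w : ZMod (2 * s) → Fin n)
    (hw : (Finset.image w Finset.univ).card = s + 1) :
    0 ≤ ∫ ω, ∏ j : ZMod (2 * s), a ((w j).1 + 1) ((w (j + 1)).1 + 1) ω ∂P := by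
  classical
  set ew : ZMod (2 * s) → {q : ℕ × ℕ // 1 ≤ q.1 ∧ q.1 ≤ q.2} :=
    fun j => ridx n (w j) (w (j + 1)) with hew
  set B := Finset.image ew Finset.univ with hB
  set cnt : {q : ℕ × ℕ // 1 ≤ q.1 ∧ q.1 ≤ q.2} → ℕ :=
    fun q => (Finset.univ.filter (fun j => ew j = q)).card with hcnt
  have hpt : ∀ ω, ∏ j : ZMod (2 * s), a ((w j).1 + 1) ((w (j + 1)).1 + 1) ω
      = ∏ q ∈ B, (a q.1.1 q.1.2 ω) ^ (cnt q) := by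
    intro ω
    calc ∏ j : ZMod (2 * s), a ((w j).1 + 1) ((w (j + 1)).1 + 1) ω
        = ∏ j : ZMod (2 * s), (fun q : {q : ℕ × ℕ // 1 ≤ q.1 ∧ q.1 ≤ q.2} =>
            a q.1.1 q.1.2 ω) (ew j) := by
          refine Finset.prod_congr rfl (fun j _ => ?_)
          exact a_ridx a hsymm (w j) (w (j + 1)) ω
      _ = ∏ q ∈ B, (a q.1.1 q.1.2 ω) ^ (cnt q) := by
          simp only [hB, hcnt]
          exact Finset.prod_comp
            (fun q : {q : ℕ × ℕ // 1 ≤ q.1 ∧ q.1 ≤ q.2} => a q.1.1 q.1.2 ω) ew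
  have hI : ∫ ω, ∏ j : ZMod (2 * s), a ((w j).1 + 1) ((w (j + 1)).1 + 1) ω ∂P
      = ∫ ω, ∏ q ∈ B, (a q.1.1 q.1.2 ω) ^ (cnt q) ∂P :=
    integral_congr_ae (Filter.Eventually.of_forall hpt)
  rw [hI]
  set g : {q : ℕ × ℕ // 1 ≤ q.1 ∧ q.1 ≤ q.2} → Ω → ℝ :=
    fun q ω => (a q.1.1 q.1.2 ω) ^ (cnt q) with hg
  have hfam : iIndepFun g P := by
    have := hindep.comp (fun q x => x ^ cnt q)
      (fun q => measurable_id.pow_const _)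
    exact this
  have hmeasg : ∀ q, Measurable (g q) := fun q => (hmeas _ _).pow_const _
  have hbg : ∀ q, ∀ᵐ ω ∂P, |g q ω| ≤ K ^ cnt q := by
    intro q
    filter_upwards [hbdd q.1.1 q.1.2 q.2.1 (le_trans q.2.1 q.2.2)] with ω hω
    rw [hg]
    calc |a q.1.1 q.1.2 ω ^ cnt q| = |a q.1.1 q.1.2 ω| ^ cnt q := abs_pow _ _
      _ ≤ K ^ cnt q := pow_le_pow_left₀ (abs_nonneg _) hω.le _
  rw [(RMTPROB.indep_prod P g hfam hmeasg _ hbg B).2]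
  by_cases hone : ∃ q ∈ B, cnt q = 1
  · obtain ⟨q, hqB, hq1⟩ := hone
    have hz : ∫ ω, g q ω ∂P = 0 := by
      rw [hg]
      simp only [hq1, pow_one]
      exact hmean _ _ q.2.1 (le_trans q.2.1 q.2.2)
    rw [Finset.prod_eq_zero hqB hz]
  · push_neg at hone
    have h2le : ∀ q ∈ B, 2 ≤ cnt q := by
      intro q hq
      obtain ⟨j, _, hje⟩ := Finset.mem_image.mp hq
      have h1le : 1 ≤ cnt q := by
        rw [hcnt]
        refine Finset.card_pos.mpr ⟨j, ?_⟩
        simp [hje]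
      have := hone q hq
      omega
    have hsum : ∑ q ∈ B, cnt q = 2 * s := by
      have := Finset.card_eq_sum_card_image ew (Finset.univ : Finset (ZMod (2 * s)))
      rw [Finset.card_univ, ZMod.card] at this
      exact this.symm
    have hBcard : s ≤ B.card := by
      have := walk_vertex_card_le (n := n) (2 * s) w
      rw [hw] at this
      rw [hB, hew]
      omega
    have hall2 : ∀ q ∈ B, cnt q = 2 := by
      by_contra hc
      push_neg at hc
      obtain ⟨q0, hq0B, hq0⟩ := hc
      have hlt : ∑ q ∈ B, 2 < ∑ q ∈ B, cnt q :=
        Finset.sum_lt_sum h2le ⟨q0, hq0B, by have := h2le q0 hq0B; omega⟩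
      rw [Finset.sum_const, hsum, smul_eq_mul] at hlt
      omega
    refine Finset.prod_nonneg (fun q hq => ?_)
    have : ∫ ω, g q ω ∂P = σ q.1.1 * σ q.1.2 := by
      rw [hg]
      simp only [hall2 q hq]
      exact hvar _ _ q.2.1 (le_trans q.2.1 q.2.2)
    rw [this]
    exact mul_nonneg (hσpos _ q.2.1).le (hσpos _ (le_trans q.2.1 q.2.2)).le

end Ensemble2


section DyckWalk

variable {s n : ℕ}

lemma dyck_dom (p : DyckWord) : Dom p.toList := fun i => p.count_D_le_count_U i

lemma dyck_len {p : DyckWord} (hsl : p.semilength = s) : p.toList.length = 2 * s := by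
  rw [← p.two_mul_semilength_eq_length, hsl]

lemma dyck_countU {p : DyckWord} (hsl : p.semilength = s) : p.toList.count U = s := hsl

lemma dyck_final_st (p : DyckWord) : (drun p.toList).st = ([(0 : ℕ)]) :=
  final_st p.toList (dyck_dom p) p.count_U_eq_count_D

lemma dyck_dtop (p : DyckWord) : dtop p.toList = 0 := by
  rw [dtop, dyck_final_st]; rfl

/-- The label of the vertex visited at time `j` on the tree walk of `p`. -/
def dwVert (s : ℕ) (p : DyckWord) (hsl : p.semilength = s) (j : ℕ) : Fin (s + 1) :=
  ⟨dtop (p.toList.take j), by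
    have h1 := dtop_take_le_countU p.toList (dyck_dom p) j
    have h2 := count_take_le p.toList j U
    have h3 : p.toList.count U = s := hsl
    omega⟩

/-- The closed tree walk on `Fin n` associated with a Dyck word `p` of semilength `s`
and an embedding of the `s + 1` vertex labels into `Fin n`. -/
def dwWalk (s n : ℕ) [NeZero (2 * s)] (p : DyckWord) (hsl : p.semilength = s)
    (f : Fin (s + 1) ↪ Fin n) : ZMod (2 * s) → Fin n :=
  fun j => f (dwVert s p hsl j.val)

lemma dwVert_mod [NeZero (2 * s)] (p : DyckWord) (hsl : p.semilength = s) {i : ℕ}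
    (hi : i < 2 * s) : dwVert s p hsl ((i + 1) % (2 * s)) = dwVert s p hsl (i + 1) := by
  rcases Nat.lt_or_ge (i + 1) (2 * s) with h | h
  · rw [Nat.mod_eq_of_lt h]
  · have h21 : i + 1 = 2 * s := by omega
    have : (i + 1) % (2 * s) = 0 := by rw [h21, Nat.mod_self]
    rw [this]
    apply Fin.ext
    show dtop (p.toList.take 0) = dtop (p.toList.take (i + 1))
    rw [h21, List.take_zero, List.take_of_length_le (le_of_eq (dyck_len hsl)), dyck_dtop]
    rfl

lemma dwWalk_cast [NeZero (2 * s)] (p : DyckWord) (hsl : p.semilength = s)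
    (f : Fin (s + 1) ↪ Fin n) {i : ℕ} (hi : i < 2 * s) :
    dwWalk s n p hsl f (i : ZMod (2 * s)) = f (dwVert s p hsl i) := by
  rw [dwWalk, ZMod.val_cast_of_lt hi]

lemma dwWalk_succ (hs : 1 ≤ s) [NeZero (2 * s)] (p : DyckWord) (hsl : p.semilength = s)
    (f : Fin (s + 1) ↪ Fin n) (j : ZMod (2 * s)) :
    dwWalk s n p hsl f (j + 1) = f (dwVert s p hsl (j.val + 1)) := by
  rw [dwWalk]
  congr 1
  haveI : Fact (1 < 2 * s) := ⟨by omega⟩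
  have hval : (j + 1).val = (j.val + 1) % (2 * s) := by
    rw [ZMod.val_add, ZMod.val_one]
  rw [hval]
  exact dwVert_mod p hsl (ZMod.val_lt j)

/-- The multiset of (sorted, in label terms) tree edges of the walk of `p`. -/
def dwPairs (p : DyckWord) : Multiset (ℕ × ℕ) :=
  (drun p.toList).pushes.map (fun c => ((drun p.toList).pf c, c))

lemma dwPairs_prop {p : DyckWord} (hsl : p.semilength = s) :
    ∀ pr ∈ dwPairs p, pr.1 < pr.2 ∧ 1 ≤ pr.2 ∧ pr.2 ≤ s := by
  intro pr hpr
  obtain ⟨c, hc, rfl⟩ := Multiset.mem_map.mp hpr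
  have I := dinv p.toList (dyck_dom p)
  refine ⟨I.hpf _ hc, ?_, ?_⟩ <;>
  · rw [I.hpushes, dyck_countU hsl] at hc
    obtain ⟨y, hy, rfl⟩ := Multiset.mem_map.mp hc
    rw [Multiset.mem_range] at hy
    omega

lemma dwPairs_card {p : DyckWord} (hsl : p.semilength = s) :
    Multiset.card (dwPairs p) = s := by
  rw [dwPairs, Multiset.card_map, (dinv p.toList (dyck_dom p)).hpushes,
    Multiset.card_map, Multiset.card_range, dyck_countU hsl]

lemma dwPairs_nodup (p : DyckWord) : (dwPairs p).Nodup := by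
  rw [dwPairs]
  have I := dinv p.toList (dyck_dom p)
  refine Multiset.Nodup.map (fun x y hxy => ?_) ?_
  · exact (Prod.mk.injEq _ _ _ _ ▸ hxy).2
  · rw [I.hpushes]
    exact (Multiset.nodup_range _).map (fun x y h => by omega)

/-- Mapping a (sorted) label pair to the corresponding matrix index. -/
def dwQ (s n : ℕ) (f : Fin (s + 1) ↪ Fin n) (pr : ℕ × ℕ) :
    {q : ℕ × ℕ // 1 ≤ q.1 ∧ q.1 ≤ q.2} :=
  ridx n (f ⟨pr.1 % (s + 1), Nat.mod_lt _ (Nat.succ_pos s)⟩)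
    (f ⟨pr.2 % (s + 1), Nat.mod_lt _ (Nat.succ_pos s)⟩)

lemma ridx_eq_dwQ (f : Fin (s + 1) ↪ Fin n) (x y : Fin (s + 1)) :
    ridx n (f x) (f y) = dwQ s n f (min x.1 y.1, max x.1 y.1) := by
  have hx : (⟨x.1 % (s + 1), Nat.mod_lt _ (Nat.succ_pos s)⟩ : Fin (s + 1)) = x :=
    Fin.ext (Nat.mod_eq_of_lt x.isLt)
  have hy : (⟨y.1 % (s + 1), Nat.mod_lt _ (Nat.succ_pos s)⟩ : Fin (s + 1)) = y :=
    Fin.ext (Nat.mod_eq_of_lt y.isLt)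
  rcases le_total x.1 y.1 with h | h
  · rw [dwQ]
    simp only [min_eq_left h, max_eq_right h, hx, hy]
  · rw [dwQ]
    simp only [min_eq_right h, max_eq_left h, hx, hy]
    exact ridx_comm n (f x) (f y)

/-- The finset of matrix indices of the tree edges of the walk. -/
def dwT (s n : ℕ) (p : DyckWord) (hsl : p.semilength = s) (f : Fin (s + 1) ↪ Fin n) :
    Finset {q : ℕ × ℕ // 1 ≤ q.1 ∧ q.1 ≤ q.2} :=
  ⟨(dwPairs p).map (dwQ s n f), by
    refine Multiset.Nodup.map_on (fun x hx y hy hxy => ?_) (dwPairs_nodup p)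
    have hxp := dwPairs_prop hsl x hx
    have hyp := dwPairs_prop hsl y hy
    have hmx1 : x.1 % (s + 1) = x.1 := Nat.mod_eq_of_lt (by omega)
    have hmx2 : x.2 % (s + 1) = x.2 := Nat.mod_eq_of_lt (by omega)
    have hmy1 : y.1 % (s + 1) = y.1 := Nat.mod_eq_of_lt (by omega)
    have hmy2 : y.2 % (s + 1) = y.2 := Nat.mod_eq_of_lt (by omega)
    rcases ridx_inj hxy with ⟨h1, h2⟩ | ⟨h1, h2⟩
    · have e1 := congrArg Fin.val (f.injective h1)
      have e2 := congrArg Fin.val (f.injective h2)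
      simp only [hmx1, hmx2, hmy1, hmy2] at e1 e2
      exact Prod.ext e1 e2
    · have e1 := congrArg Fin.val (f.injective h1)
      have e2 := congrArg Fin.val (f.injective h2)
      simp only [hmx1, hmx2, hmy1, hmy2] at e1 e2
      exfalso
      omega⟩

lemma dwT_card {p : DyckWord} (hsl : p.semilength = s) (f : Fin (s + 1) ↪ Fin n) :
    (dwT s n p hsl f).card = s := by
  show Multiset.card ((dwPairs p).map (dwQ s n f)) = s
  rw [Multiset.card_map, dwPairs_card hsl]

lemma dwT_le {p : DyckWord} (hsl : p.semilength = s) (f : Fin (s + 1) ↪ Fin n) :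
    ∀ q ∈ dwT s n p hsl f, q.1.1 ≤ n ∧ q.1.2 ≤ n := by
  intro q hq
  obtain ⟨pr, _, rfl⟩ := Multiset.mem_map.mp hq
  set u := (f ⟨pr.1 % (s + 1), Nat.mod_lt _ (Nat.succ_pos s)⟩).1 with hu
  set v := (f ⟨pr.2 % (s + 1), Nat.mod_lt _ (Nat.succ_pos s)⟩).1 with hv
  have h1 : u < n := Fin.isLt _
  have h2 : v < n := Fin.isLt _
  have e1 : (dwQ s n f pr).1.1 = min u v + 1 := rfl
  have e2 : (dwQ s n f pr).1.2 = max u v + 1 := rfl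
  refine ⟨?_, ?_⟩
  · rw [e1]
    have h3 : min u v ≤ u := min_le_left _ _
    omega
  · rw [e2]
    have h3 : max u v < n := max_lt h1 h2
    omega

lemma list_range_prod {M : Type*} [CommMonoid M] (φ : ℕ → M) (k : ℕ) :
    ((List.range k).map φ).prod = ∏ i ∈ Finset.range k, φ i := by
  induction k with
  | zero => simp
  | succ k ih =>
      rw [List.range_succ, List.map_append, List.prod_append, Finset.prod_range_succ, ih]
      simp

/-- The fundamental product formula: a product over the steps of the tree walk
equals the product over its distinct edges, squared. -/
lemma dwWalk_prod (hs : 1 ≤ s) [NeZero (2 * s)] (p : DyckWord) (hsl : p.semilength = s)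
    (f : Fin (s + 1) ↪ Fin n) {M : Type*} [CommMonoid M]
    (F : {q : ℕ × ℕ // 1 ≤ q.1 ∧ q.1 ≤ q.2} → M) :
    ∏ j : ZMod (2 * s), F (ridx n (dwWalk s n p hsl f j) (dwWalk s n p hsl f (j + 1)))
      = ∏ q ∈ dwT s n p hsl f, (F q) ^ 2 := by
  set l := p.toList with hl
  set φ : ℕ → M := fun m =>
    F (dwQ s n f (min (dtop (l.take m)) (dtop (l.take (m + 1))),
        max (dtop (l.take m)) (dtop (l.take (m + 1))))) with hφ
  have step1 : ∏ j : ZMod (2 * s),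
      F (ridx n (dwWalk s n p hsl f j) (dwWalk s n p hsl f (j + 1)))
      = ∏ i : Fin (2 * s), φ i.1 := by
    refine (Fintype.prod_equiv (zeq (2 * s)) _ _ (fun i => ?_)).symm
    show φ i.1 = F (ridx n (dwWalk s n p hsl f (i.1 : ZMod (2 * s)))
      (dwWalk s n p hsl f ((i.1 : ZMod (2 * s)) + 1)))
    rw [dwWalk_cast p hsl f i.isLt, dwWalk_succ hs p hsl f]
    rw [ZMod.val_cast_of_lt i.isLt]
    rw [ridx_eq_dwQ f (dwVert s p hsl i.1) (dwVert s p hsl (i.1 + 1))]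
    rfl
  rw [step1]
  have step2 : ∏ i : Fin (2 * s), φ i.1 = ((List.range (2 * s)).map φ).prod := by
    rw [list_range_prod]
    exact Fin.prod_univ_eq_prod_range φ (2 * s)
  rw [step2]
  have step3 : ((List.range (2 * s)).map φ).prod
      = ((dwPairs p).map (fun pr => F (dwQ s n f pr)) +
         (dwPairs p).map (fun pr => F (dwQ s n f pr))).prod := by
    have h1 : (List.range (2 * s)).map φ = (stepPairs l).map (fun pr => F (dwQ s n f pr)) := by
      rw [stepPairs, ← dyck_len hsl, List.map_map]
      rfl
    have h2 : (↑((stepPairs l).map (fun pr => F (dwQ s n f pr))) : Multiset M).prod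
        = ((↑(stepPairs l) : Multiset (ℕ × ℕ)).map (fun pr => F (dwQ s n f pr))).prod := by
      congr 1
    calc ((List.range (2 * s)).map φ).prod
        = (↑((stepPairs l).map (fun pr => F (dwQ s n f pr))) : Multiset M).prod := by
          rw [h1]; rfl
      _ = ((↑(stepPairs l) : Multiset (ℕ × ℕ)).map (fun pr => F (dwQ s n f pr))).prod := h2
      _ = ((drun l).edges.map (fun pr => F (dwQ s n f pr))).prod := by
          rw [stepPairs_eq l (dyck_dom p)]
      _ = _ := by
          rw [final_edges l (dyck_dom p) p.count_U_eq_count_D, Multiset.map_add]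
          rfl
  rw [step3, Multiset.prod_add]
  have step4 : ((dwPairs p).map (fun pr => F (dwQ s n f pr))).prod
      = ∏ q ∈ dwT s n p hsl f, F q := by
    rw [Finset.prod_eq_multiset_prod]
    show _ = (((dwPairs p).map (dwQ s n f)).map F).prod
    rw [Multiset.map_map]
    rfl
  rw [step4, Finset.prod_pow, sq]

end DyckWalk


section DyckWalk2

variable {s n : ℕ}

lemma step_char (p : DyckWord) {i : ℕ} (hi : i < p.toList.length) :
    p.toList[i] = D ↔
      ∃ j ≤ i, dtop (p.toList.take j) = dtop (p.toList.take (i + 1)) := by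
  constructor
  · intro hD
    have hmem := (dtop_take_succ_D p.toList (dyck_dom p) hi hD).1
    obtain ⟨j, hj, hjt⟩ := exists_time_of_stack (p.toList.take i) ((dyck_dom p).take i)
      _ hmem
    have hlen : (p.toList.take i).length = i := by
      rw [List.length_take]; omega
    rw [hlen] at hj
    rw [List.take_take, min_eq_left hj] at hjt
    exact ⟨j, hj, hjt⟩
  · intro ⟨j, hj, hjt⟩
    by_contra hne
    have hU : p.toList[i] = U := (DyckStep.dichotomy _).resolve_right hne
    have h1 := dtop_take_succ_U p.toList hi hU
    have h2 := dtop_take_lt_c p.toList (dyck_dom p) hj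
    omega

lemma dwVert_surj (hs : 1 ≤ s) [NeZero (2 * s)] (p : DyckWord) (hsl : p.semilength = s)
    (m : Fin (s + 1)) : ∃ j : ZMod (2 * s), dwVert s p hsl j.val = m := by
  rcases Nat.eq_zero_or_pos m.1 with h0 | h1
  · refine ⟨0, Fin.ext ?_⟩
    rw [ZMod.val_zero]
    show dtop (p.toList.take 0) = m.1
    rw [List.take_zero, h0]
    rfl
  · have hmem : (m.1 : ℕ) ∈ (drun p.toList).pushes := by
      rw [(dinv p.toList (dyck_dom p)).hpushes, dyck_countU hsl, Multiset.mem_map]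
      exact ⟨m.1 - 1, Multiset.mem_range.mpr (by have := m.isLt; omega), by omega⟩
    obtain ⟨j, hj, hjt⟩ := exists_time_of_push p.toList (dyck_dom p) _ hmem
    have hjlt : j < 2 * s := by
      rcases Nat.lt_or_ge j (2 * s) with h | h
      · exact h
      · exfalso
        have hj2 : j = 2 * s := by rw [dyck_len hsl] at hj; omega
        rw [hj2, ← dyck_len hsl, List.take_length, dyck_dtop] at hjt
        omega
    refine ⟨(j : ZMod (2 * s)), Fin.ext ?_⟩
    rw [ZMod.val_cast_of_lt hjlt]
    exact hjt

lemma dwWalk_range (hs : 1 ≤ s) [NeZero (2 * s)] (p : DyckWord) (hsl : p.semilength = s)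
    (f : Fin (s + 1) ↪ Fin n) :
    Set.range (dwWalk s n p hsl f) = f '' Set.univ := by
  rw [show dwWalk s n p hsl f = f ∘ (fun j : ZMod (2 * s) => dwVert s p hsl j.val) from rfl,
    Set.range_comp]
  have huniv : Set.range (fun j : ZMod (2 * s) => dwVert s p hsl j.val) = Set.univ :=
    Set.eq_univ_of_forall (fun m => dwVert_surj hs p hsl m)
  rw [huniv]

lemma range_card_eq_image_card {α β : Type*} [Fintype α] [DecidableEq β] (w : α → β) :
    Nat.card (Set.range w) = (Finset.image w Finset.univ).card := by
  rw [Nat.card_eq_fintype_card, ← Set.toFinset_card, Set.toFinset_range]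

lemma dwWalk_ncard (hs : 1 ≤ s) [NeZero (2 * s)] (p : DyckWord) (hsl : p.semilength = s)
    (f : Fin (s + 1) ↪ Fin n) :
    Nat.card (Set.range (dwWalk s n p hsl f)) = s + 1 := by
  rw [dwWalk_range hs p hsl f, Nat.card_image_of_injective f.injective,
    Nat.card_congr (Equiv.Set.univ _), Nat.card_eq_fintype_card, Fintype.card_fin]

lemma dwWalk_inj (hs : 1 ≤ s) [NeZero (2 * s)] {p p' : DyckWord} {hsl : p.semilength = s}
    {hsl' : p'.semilength = s} {f f' : Fin (s + 1) ↪ Fin n}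
    (h : dwWalk s n p hsl f = dwWalk s n p' hsl' f') : p = p' ∧ f = f' := by
  have hw : ∀ j : ZMod (2 * s), dwWalk s n p hsl f j = dwWalk s n p' hsl' f' j :=
    fun j => congrFun h j
  have hv1 : ∀ i : ℕ, i < 2 * s → f (dwVert s p hsl i) = f' (dwVert s p' hsl' i) := by
    intro i hi
    have := hw (i : ZMod (2 * s))
    rwa [dwWalk_cast p hsl f hi, dwWalk_cast p' hsl' f' hi] at this
  have hv2 : ∀ i : ℕ, i < 2 * s → f (dwVert s p hsl (i + 1)) = f' (dwVert s p' hsl' (i + 1)) := by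
    intro i hi
    have := hw ((i : ZMod (2 * s)) + 1)
    rwa [dwWalk_succ hs p hsl f, dwWalk_succ hs p' hsl' f', ZMod.val_cast_of_lt hi] at this
  have hpp : p = p' := by
    have hlist : p.toList = p'.toList := by
      apply List.ext_getElem (by rw [dyck_len hsl, dyck_len hsl'])
      intro i h1 h2
      have hi : i < 2 * s := by rwa [dyck_len hsl] at h1
      have hstep : ∀ j ≤ i, (dtop (p.toList.take j) = dtop (p.toList.take (i + 1)) ↔
          dtop (p'.toList.take j) = dtop (p'.toList.take (i + 1))) := by
        intro j hj
        have hj2 : j < 2 * s := by omega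
        constructor
        · intro he
          have h3 : dwVert s p hsl j = dwVert s p hsl (i + 1) := Fin.ext he
          have h4 : f' (dwVert s p' hsl' j) = f' (dwVert s p' hsl' (i + 1)) := by
            rw [← hv1 j hj2, ← hv2 i hi, h3]
          exact congrArg Fin.val (f'.injective h4)
        · intro he
          have h3 : dwVert s p' hsl' j = dwVert s p' hsl' (i + 1) := Fin.ext he
          have h4 : f (dwVert s p hsl j) = f (dwVert s p hsl (i + 1)) := by
            rw [hv1 j hj2, hv2 i hi, h3]
          exact congrArg Fin.val (f.injective h4)
      rcases DyckStep.dichotomy p.toList[i] with hU | hD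
      · rcases DyckStep.dichotomy p'.toList[i] with hU' | hD'
        · rw [hU, hU']
        · exfalso
          obtain ⟨j, hj, hjt⟩ := (step_char p' h2).mp hD'
          have := (step_char p h1).mpr ⟨j, hj, (hstep j hj).mpr hjt⟩
          rw [hU] at this
          exact (by simp : (U : DyckStep) ≠ D) this
      · rcases DyckStep.dichotomy p'.toList[i] with hU' | hD'
        · exfalso
          obtain ⟨j, hj, hjt⟩ := (step_char p h1).mp hD
          have := (step_char p' h2).mpr ⟨j, hj, (hstep j hj).mp hjt⟩
          rw [hU'] at this
          exact (by simp : (U : DyckStep) ≠ D) this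
        · rw [hD, hD']
    exact DyckWord.ext hlist
  subst hpp
  refine ⟨rfl, ?_⟩
  apply DFunLike.ext
  intro m
  obtain ⟨j, hj⟩ := dwVert_surj hs p hsl m
  have h5 := hv1 j.val (ZMod.val_lt j)
  have h6 : dwVert s p hsl' j.val = m := hj
  rw [hj] at h5
  exact h5

end DyckWalk2


section Final

open MeasureTheory ProbabilityTheory

variable {Ω : Type} [MeasurableSpace Ω] (P : Measure Ω) [IsProbabilityMeasure P]

lemma dwWalk_exp (K : ℝ) (hK : 0 < K) (σ : ℕ → ℝ) (a : ℕ → ℕ → Ω → ℝ)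
    (hmeas : ∀ i j, Measurable (a i j))
    (hsymm : ∀ i j, a i j = a j i)
    (hindep : iIndepFun
      (fun q : {q : ℕ × ℕ // 1 ≤ q.1 ∧ q.1 ≤ q.2} => a q.1.1 q.1.2) P)
    (hvar : ∀ i j, 1 ≤ i → 1 ≤ j → ∫ ω, (a i j ω) ^ 2 ∂P = σ i * σ j)
    (hbdd : ∀ i j, 1 ≤ i → 1 ≤ j → ∀ᵐ ω ∂P, |a i j ω| < K)
    {s n : ℕ} (hs : 1 ≤ s) [NeZero (2 * s)]
    (p : DyckWord) (hsl : p.semilength = s) (f : Fin (s + 1) ↪ Fin n) :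
    ∫ ω, ∏ j : ZMod (2 * s),
        a ((dwWalk s n p hsl f j).1 + 1) ((dwWalk s n p hsl f (j + 1)).1 + 1) ω ∂P
      = ∏ q ∈ dwT s n p hsl f, (σ q.1.1 * σ q.1.2) := by
  classical
  set w := dwWalk s n p hsl f with hwdef
  have hpt : ∀ ω, (∏ j : ZMod (2 * s), a ((w j).1 + 1) ((w (j + 1)).1 + 1) ω)
      = ∏ q ∈ dwT s n p hsl f, (a q.1.1 q.1.2 ω) ^ 2 := by
    intro ω
    have e1 : (∏ j : ZMod (2 * s), a ((w j).1 + 1) ((w (j + 1)).1 + 1) ω)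
        = ∏ j : ZMod (2 * s), (fun q : {q : ℕ × ℕ // 1 ≤ q.1 ∧ q.1 ≤ q.2} =>
            a q.1.1 q.1.2 ω) (ridx n (w j) (w (j + 1))) :=
      Finset.prod_congr rfl (fun j _ => a_ridx a hsymm _ _ ω)
    rw [e1, hwdef]
    exact dwWalk_prod hs p hsl f (fun q : {q : ℕ × ℕ // 1 ≤ q.1 ∧ q.1 ≤ q.2} => a q.1.1 q.1.2 ω)
  have hI : (∫ ω, ∏ j : ZMod (2 * s), a ((w j).1 + 1) ((w (j + 1)).1 + 1) ω ∂P)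
      = ∫ ω, ∏ q ∈ dwT s n p hsl f, (a q.1.1 q.1.2 ω) ^ 2 ∂P :=
    integral_congr_ae (Filter.Eventually.of_forall hpt)
  rw [hI]
  set g : {q : ℕ × ℕ // 1 ≤ q.1 ∧ q.1 ≤ q.2} → Ω → ℝ :=
    fun q ω => (a q.1.1 q.1.2 ω) ^ 2 with hg
  have hfam : iIndepFun g P := by
    have := hindep.comp (fun q (x : ℝ) => x ^ 2) (fun q => measurable_id.pow_const _)
    exact this
  have hmeasg : ∀ q, Measurable (g q) := fun q => (hmeas _ _).pow_const _
  have hbg : ∀ q, ∀ᵐ ω ∂P, |g q ω| ≤ K ^ 2 := by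
    intro q
    filter_upwards [hbdd q.1.1 q.1.2 q.2.1 (le_trans q.2.1 q.2.2)] with ω hω
    rw [hg]
    calc |a q.1.1 q.1.2 ω ^ 2| = |a q.1.1 q.1.2 ω| ^ 2 := abs_pow _ _
      _ ≤ K ^ 2 := pow_le_pow_left₀ (abs_nonneg _) hω.le _
  rw [(RMTPROB.indep_prod P g hfam hmeasg _ hbg (dwT s n p hsl f)).2]
  refine Finset.prod_congr rfl (fun q _ => ?_)
  exact hvar _ _ q.2.1 (le_trans q.2.1 q.2.2)

end Final


end RMTX

open RMTX RMTPROB in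
open MeasureTheory ProbabilityTheory in
/-- **Lower bound for the dominant term**: for `n ≥ s + 1`,
`μ_{2s,s+1} ≥ ((n−s)/n)^{s+1}·C_s·σ̌_n^{2s}`. -/
theorem mu_dominant_lower_bound {Ω : Type} [MeasurableSpace Ω]
    (P : Measure Ω) [IsProbabilityMeasure P]
    (K : ℝ) (hK : 0 < K)
    (σ : ℕ → ℝ) (hσpos : ∀ i, 1 ≤ i → 0 < σ i)
    (a : ℕ → ℕ → Ω → ℝ)
    (hmeas : ∀ i j, Measurable (a i j))
    (hsymm : ∀ i j, a i j = a j i)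
    (hindep : iIndepFun
      (fun q : {q : ℕ × ℕ // 1 ≤ q.1 ∧ q.1 ≤ q.2} => a q.1.1 q.1.2) P)
    (hmean : ∀ i j, 1 ≤ i → 1 ≤ j → ∫ ω, a i j ω ∂P = 0)
    (hvar : ∀ i j, 1 ≤ i → 1 ≤ j → ∫ ω, (a i j ω) ^ 2 ∂P = σ i * σ j)
    (hbdd : ∀ i j, 1 ≤ i → 1 ≤ j → ∀ᵐ ω ∂P, |a i j ω| < K)
    (s : ℕ) (hs : 1 ≤ s) (n : ℕ) (hn : s + 1 ≤ n) :
    muW P a (2 * s) (s + 1) n (by omega) ≥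
      (((n : ℝ) - s) / n) ^ (s + 1) * (catalan s : ℝ) * sigCheck σ n ^ (2 * s) := by
  classical
  haveI hNZ : NeZero (2 * s) := ⟨by omega⟩
  have hn0 : (0 : ℝ) < n := by
    have : (0 : ℕ) < n := by omega
    exact_mod_cast this
  -- `sigCheck` facts
  have hfin : (σ '' Set.Icc 1 n).Finite := (Set.finite_Icc 1 n).image σ
  have hne : (σ '' Set.Icc 1 n).Nonempty := ⟨σ 1, 1, ⟨le_refl 1, by omega⟩, rfl⟩
  have hscpos : 0 < sigCheck σ n := by
    obtain ⟨i, ⟨hi1, _⟩, hie⟩ := hne.csInf_mem hfin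
    rw [sigCheck, ← hie]
    exact hσpos i hi1
  have hscle : ∀ i, 1 ≤ i → i ≤ n → sigCheck σ n ≤ σ i := fun i h1 h2 =>
    csInf_le hfin.bddBelow ⟨i, ⟨h1, h2⟩, rfl⟩
  have hsc2s : (0 : ℝ) ≤ sigCheck σ n ^ (2 * s) := by positivity
  -- each tree walk is in `Wset` and contributes at least `σ̌ ^ (2s)`
  have hWmem : ∀ x : {p : DyckWord // p.semilength = s} × (Fin (s + 1) ↪ Fin n),
      dwWalk s n x.1.1 x.1.2 x.2 ∈ Wset (2 * s) n (s + 1) := by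
    intro x
    show Nat.card (Set.range (dwWalk s n x.1.1 x.1.2 x.2)) = s + 1
    exact dwWalk_ncard hs x.1.1 x.1.2 x.2
  have hterm : ∀ x : {p : DyckWord // p.semilength = s} × (Fin (s + 1) ↪ Fin n),
      sigCheck σ n ^ (2 * s) ≤
        ∫ ω, ∏ j : ZMod (2 * s), a ((dwWalk s n x.1.1 x.1.2 x.2 j).1 + 1)
          ((dwWalk s n x.1.1 x.1.2 x.2 (j + 1)).1 + 1) ω ∂P := by
    intro x
    rw [dwWalk_exp P K hK σ a hmeas hsymm hindep hvar hbdd hs x.1.1 x.1.2 x.2]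
    calc sigCheck σ n ^ (2 * s) = (sigCheck σ n ^ 2) ^ s := by rw [← pow_mul]
      _ = ∏ _q ∈ dwT s n x.1.1 x.1.2 x.2, sigCheck σ n ^ 2 := by
          rw [Finset.prod_const, dwT_card x.1.2 x.2]
      _ ≤ ∏ q ∈ dwT s n x.1.1 x.1.2 x.2, σ q.1.1 * σ q.1.2 := by
          refine Finset.prod_le_prod (fun q _ => by positivity) (fun q hq => ?_)
          obtain ⟨hq1, hq2⟩ := dwT_le x.1.2 x.2 q hq
          have e1 : sigCheck σ n ≤ σ q.1.1 := hscle _ q.2.1 hq1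
          have e2 : sigCheck σ n ≤ σ q.1.2 := hscle _ (le_trans q.2.1 q.2.2) hq2
          calc sigCheck σ n ^ 2 = sigCheck σ n * sigCheck σ n := sq _
            _ ≤ σ q.1.1 * σ q.1.2 := mul_le_mul e1 e2 hscpos.le (le_trans hscpos.le e1)
  -- lower bound on the big sum
  have hnonneg : ∀ w : ZMod (2 * s) → Fin n,
      0 ≤ (if w ∈ Wset (2 * s) n (s + 1) then
        ∫ ω, ∏ j : ZMod (2 * s), a ((w j).1 + 1) ((w (j + 1)).1 + 1) ω ∂P else 0) := by
    intro w
    by_cases hw : w ∈ Wset (2 * s) n (s + 1)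
    · rw [if_pos hw]
      refine exp_nonneg P K σ a hK hmeas hsymm hindep hmean hvar hσpos hbdd s hs w ?_
      have hcard : Nat.card (Set.range w) = s + 1 := hw
      rw [← range_card_eq_image_card w]
      exact hcard
    · rw [if_neg hw]
  have hinj : ∀ x ∈ (Finset.univ : Finset ({p : DyckWord // p.semilength = s} ×
      (Fin (s + 1) ↪ Fin n))), ∀ y ∈ (Finset.univ : Finset ({p : DyckWord // p.semilength = s} ×
      (Fin (s + 1) ↪ Fin n))),
      dwWalk s n x.1.1 x.1.2 x.2 = dwWalk s n y.1.1 y.1.2 y.2 → x = y := by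
    intro x _ y _ hxy
    obtain ⟨hp, hf⟩ := dwWalk_inj hs hxy
    exact Prod.ext (Subtype.ext hp) hf
  have hsum1 : ((catalan s * n.descFactorial (s + 1) : ℕ) : ℝ) * sigCheck σ n ^ (2 * s) ≤
      ∑ w : ZMod (2 * s) → Fin n, (if w ∈ Wset (2 * s) n (s + 1) then
        ∫ ω, ∏ j : ZMod (2 * s), a ((w j).1 + 1) ((w (j + 1)).1 + 1) ω ∂P else 0) := by
    have h1 : ∑ w ∈ Finset.univ.image
          (fun x : {p : DyckWord // p.semilength = s} × (Fin (s + 1) ↪ Fin n) =>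
            dwWalk s n x.1.1 x.1.2 x.2),
          (if w ∈ Wset (2 * s) n (s + 1) then
            ∫ ω, ∏ j : ZMod (2 * s), a ((w j).1 + 1) ((w (j + 1)).1 + 1) ω ∂P else 0)
        ≤ ∑ w : ZMod (2 * s) → Fin n, (if w ∈ Wset (2 * s) n (s + 1) then
            ∫ ω, ∏ j : ZMod (2 * s), a ((w j).1 + 1) ((w (j + 1)).1 + 1) ω ∂P else 0) :=
      Finset.sum_le_sum_of_subset_of_nonneg (Finset.subset_univ _)
        (fun w _ _ => hnonneg w)
    refine le_trans ?_ h1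
    rw [Finset.sum_image hinj]
    have h2 : ∀ x : {p : DyckWord // p.semilength = s} × (Fin (s + 1) ↪ Fin n),
        (if dwWalk s n x.1.1 x.1.2 x.2 ∈ Wset (2 * s) n (s + 1) then
          ∫ ω, ∏ j : ZMod (2 * s), a ((dwWalk s n x.1.1 x.1.2 x.2 j).1 + 1)
            ((dwWalk s n x.1.1 x.1.2 x.2 (j + 1)).1 + 1) ω ∂P else 0)
        = ∫ ω, ∏ j : ZMod (2 * s), a ((dwWalk s n x.1.1 x.1.2 x.2 j).1 + 1)
            ((dwWalk s n x.1.1 x.1.2 x.2 (j + 1)).1 + 1) ω ∂P :=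
      fun x => if_pos (hWmem x)
    calc ((catalan s * n.descFactorial (s + 1) : ℕ) : ℝ) * sigCheck σ n ^ (2 * s)
        = (Finset.univ : Finset ({p : DyckWord // p.semilength = s} ×
            (Fin (s + 1) ↪ Fin n))).card • sigCheck σ n ^ (2 * s) := by
          rw [Finset.card_univ, Fintype.card_prod,
            DyckWord.card_dyckWord_semilength_eq_catalan,
            Fintype.card_embedding_eq, Fintype.card_fin, Fintype.card_fin,
            nsmul_eq_mul]
      _ ≤ ∑ x : {p : DyckWord // p.semilength = s} × (Fin (s + 1) ↪ Fin n),
            ∫ ω, ∏ j : ZMod (2 * s), a ((dwWalk s n x.1.1 x.1.2 x.2 j).1 + 1)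
              ((dwWalk s n x.1.1 x.1.2 x.2 (j + 1)).1 + 1) ω ∂P :=
          Finset.card_nsmul_le_sum _ _ _ (fun x _ => hterm x)
      _ = _ := by
          refine Finset.sum_congr rfl (fun x _ => ?_)
          rw [h2 x]
  -- unfold muW and conclude
  have hmuW : muW P a (2 * s) (s + 1) n (by omega) =
      ((n : ℝ) ^ (s + 1))⁻¹ * ∑ w : ZMod (2 * s) → Fin n,
        (if w ∈ Wset (2 * s) n (s + 1) then
          ∫ ω, ∏ j : ZMod (2 * s), a ((w j).1 + 1) ((w (j + 1)).1 + 1) ω ∂P else 0) := by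
    rw [muW]
    congr 1
    rw [show (-(((2 * s : ℕ) : ℝ) / 2 + 1)) = -(((s + 1 : ℕ) : ℝ)) by push_cast; ring]
    rw [Real.rpow_neg hn0.le, Real.rpow_natCast]
  rw [ge_iff_le, hmuW]
  have hdesc : (n - s) ^ (s + 1) ≤ n.descFactorial (s + 1) := by
    rw [Nat.descFactorial_eq_prod_range]
    calc (n - s) ^ (s + 1) = ∏ _i ∈ Finset.range (s + 1), (n - s) := by
          rw [Finset.prod_const, Finset.card_range]
      _ ≤ ∏ i ∈ Finset.range (s + 1), (n - i) :=
          Finset.prod_le_prod' (fun i hi => by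
            rw [Finset.mem_range] at hi; omega)
  have hcast : ((n : ℝ) - s) = ((n - s : ℕ) : ℝ) := by
    rw [Nat.cast_sub (by omega)]
  calc (((n : ℝ) - s) / n) ^ (s + 1) * (catalan s : ℝ) * sigCheck σ n ^ (2 * s)
      = ((n : ℝ) ^ (s + 1))⁻¹ *
          ((catalan s : ℝ) * ((n : ℝ) - s) ^ (s + 1) * sigCheck σ n ^ (2 * s)) := by
        rw [div_pow, div_eq_mul_inv]
        ring
    _ ≤ ((n : ℝ) ^ (s + 1))⁻¹ *
          (((catalan s * n.descFactorial (s + 1) : ℕ) : ℝ) * sigCheck σ n ^ (2 * s)) := by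
        refine mul_le_mul_of_nonneg_left ?_ (by positivity)
        refine mul_le_mul_of_nonneg_right ?_ hsc2s
        rw [hcast, ← Nat.cast_pow, ← Nat.cast_mul]
        exact_mod_cast Nat.mul_le_mul_left (catalan s) hdesc
    _ ≤ _ := mul_le_mul_of_nonneg_left hsum1 (by positivity)
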